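/- Let m, n be coprime odd positive integers. Denote by [n/m] the sign of the permutation of Z/mZ induced by multiplication by n, and similarly [m/n]. Then [m/n]·[n/m] = (−1)^((m−1)(n−1)/4). -/

import Mathlib

open Equiv Equiv.Perm Finset

private lemma digit_lt {m a1 a2 b1 b2 : ℕ} (h1 : a1 < m) (h2 : a2 < m) :
    a1 + m * b1 < a2 + m * b2 ↔ b1 < b2 ∨ (b1 = b2 ∧ a1 < a2) := by
  rcases lt_trichotomy b1 b2 with hb | rfl | hb
  · simp only [hb, true_or, iff_true]
    calc a1 + m * b1 < m + m * b1 := by omega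
    _ = m * (b1 + 1) := by ring
    _ ≤ m * b2 := Nat.mul_le_mul_left m hb
    _ ≤ a2 + m * b2 := by omega
  · omega
  · have : a2 + m * b2 < a1 + m * b1 := by
      calc a2 + m * b2 < m + m * b2 := by omega
      _ = m * (b2 + 1) := by ring
      _ ≤ m * b1 := Nat.mul_le_mul_left m hb
      _ ≤ a1 + m * b1 := by omega
    omega

private lemma digit_bound {m n a b : ℕ} (ha : a < m) (hb : b < n) : a + m * b < m * n := by
  calc a + m * b < m + m * b := by omega
  _ = m * (b + 1) := by ring
  _ ≤ m * n := Nat.mul_le_mul_left m hb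

private lemma digit_mod {m q r : ℕ} (hq : q < m) : (q + m * r) % m = q := by
  rw [Nat.add_mul_mod_self_left, Nat.mod_eq_of_lt hq]

private lemma digit_div {m q r : ℕ} (hq : q < m) (hm : 0 < m) : (q + m * r) / m = r := by
  rw [Nat.add_mul_div_left _ _ hm, Nat.div_eq_of_lt hq, Nat.zero_add]

/-- the digit-transpose permutation of `Fin (m*n)` : `n*q + r ↦ q + m*r`. -/
private def transPerm (m n : ℕ) (hm : 0 < m) (hn : 0 < n) : Perm (Fin (m * n)) where
  toFun x := ⟨x.val / n + m * (x.val % n), by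
    have h1 : x.val / n < m := Nat.div_lt_of_lt_mul (lt_of_lt_of_eq x.isLt (mul_comm m n))
    exact digit_bound h1 (Nat.mod_lt _ hn)⟩
  invFun y := ⟨y.val / m + n * (y.val % m), by
    have h1 : y.val / m < n := Nat.div_lt_of_lt_mul y.isLt
    exact lt_of_lt_of_eq (digit_bound h1 (Nat.mod_lt _ hm)) (mul_comm n m)⟩
  left_inv x := by
    have h1 : x.val / n < m := Nat.div_lt_of_lt_mul (lt_of_lt_of_eq x.isLt (mul_comm m n))
    apply Fin.ext
    simp only [digit_mod h1, digit_div h1 hm]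
    exact Nat.mod_add_div _ _
  right_inv y := by
    have h1 : y.val / m < n := Nat.div_lt_of_lt_mul y.isLt
    apply Fin.ext
    simp only [digit_mod h1, digit_div h1 hn]
    exact Nat.mod_add_div _ _

private lemma transPerm_apply (m n : ℕ) (hm : 0 < m) (hn : 0 < n) (x : Fin (m * n)) :
    (transPerm m n hm hn x : ℕ) = x.val / n + m * (x.val % n) := rfl

private lemma sigma_pair_eq {α : Type*} (a b a' b' : α) (h1 : a = a') (h2 : b = b') :
    (⟨a, b⟩ : Σ _ : α, α) = ⟨a', b'⟩ := by subst h1; subst h2; rfl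

private lemma sign_transPerm (m n : ℕ) (hm : 0 < m) (hn : 0 < n) :
    Equiv.Perm.signAux (transPerm m n hm hn) =
      (-1 : ℤˣ) ^ ((∑ a : Fin m, (a : ℕ)) * (∑ b : Fin n, (b : ℕ))) := by
  have hq : ∀ x : Fin (m * n), x.val / n < m :=
    fun x => Nat.div_lt_of_lt_mul (lt_of_lt_of_eq x.isLt (mul_comm m n))
  unfold Equiv.Perm.signAux
  rw [← Finset.prod_filter_mul_prod_filter_not (Equiv.Perm.finPairsLT (m * n))
    (fun x => transPerm m n hm hn x.1 ≤ transPerm m n hm hn x.2)]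
  have h2 : ∏ x ∈ (Equiv.Perm.finPairsLT (m * n)).filter
      (fun x => ¬ transPerm m n hm hn x.1 ≤ transPerm m n hm hn x.2),
      (if transPerm m n hm hn x.1 ≤ transPerm m n hm hn x.2 then (-1 : ℤˣ) else 1) = 1 :=
    Finset.prod_eq_one fun x hx => if_neg (Finset.mem_filter.1 hx).2
  have h1 : ∏ x ∈ (Equiv.Perm.finPairsLT (m * n)).filter
      (fun x => transPerm m n hm hn x.1 ≤ transPerm m n hm hn x.2),
      (if transPerm m n hm hn x.1 ≤ transPerm m n hm hn x.2 then (-1 : ℤˣ) else 1) =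
      (-1 : ℤˣ) ^ ((Equiv.Perm.finPairsLT (m * n)).filter
        (fun x => transPerm m n hm hn x.1 ≤ transPerm m n hm hn x.2)).card := by
    rw [← Finset.prod_const]
    exact Finset.prod_congr rfl fun x hx => if_pos (Finset.mem_filter.1 hx).2
  rw [h1, h2, mul_one]
  congr 1
  have key : ((Equiv.Perm.finPairsLT (m * n)).filter
      (fun x => transPerm m n hm hn x.1 ≤ transPerm m n hm hn x.2)).card =
      (((univ : Finset (Fin m)).sigma fun a => Finset.Iio a) ×ˢ
        ((univ : Finset (Fin n)).sigma fun b => Finset.Iio b)).card := by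
    apply Finset.card_nbij'
      (i := fun x => (⟨⟨x.1.val / n, hq x.1⟩, ⟨x.2.val / n, hq x.2⟩⟩,
        ⟨⟨x.2.val % n, Nat.mod_lt _ hn⟩, ⟨x.1.val % n, Nat.mod_lt _ hn⟩⟩))
      (j := fun p => ⟨⟨p.2.2.val + n * p.1.1.val,
          lt_of_lt_of_eq (digit_bound p.2.2.isLt p.1.1.isLt) (mul_comm n m)⟩,
        ⟨p.2.1.val + n * p.1.2.val,
          lt_of_lt_of_eq (digit_bound p.2.1.isLt p.1.2.isLt) (mul_comm n m)⟩⟩)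
    · -- maps into target
      intro x hx
      simp only [Finset.mem_coe, Finset.mem_filter, Equiv.Perm.mem_finPairsLT, Fin.lt_def, Fin.le_def,
        transPerm_apply] at hx
      obtain ⟨hlt, hle⟩ := hx
      have hv1 := Nat.mod_add_div x.1.val n
      have hv2 := Nat.mod_add_div x.2.val n
      have d1 := digit_lt (Nat.mod_lt x.2.val hn) (Nat.mod_lt x.1.val hn)
        (b1 := x.2.val / n) (b2 := x.1.val / n)
      have d2 := digit_lt (hq x.2) (hq x.1) (b1 := x.2.val % n) (b2 := x.1.val % n)
      simp only [Finset.mem_coe, Finset.mem_product, Finset.mem_sigma, Finset.mem_univ, Finset.mem_Iio,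
        Fin.lt_def, Fin.mk_lt_mk, true_and]
      exact ⟨by omega, by omega⟩
    · -- maps back into source
      intro p hp
      simp only [Finset.mem_coe, Finset.mem_product, Finset.mem_sigma, Finset.mem_univ, Finset.mem_Iio,
        Fin.lt_def, true_and] at hp
      simp only [Finset.mem_coe, Finset.mem_filter, Equiv.Perm.mem_finPairsLT, Fin.lt_def, Fin.le_def,
        transPerm_apply]
      rw [digit_div p.2.2.isLt hn, digit_mod p.2.2.isLt,
        digit_div p.2.1.isLt hn, digit_mod p.2.1.isLt]
      constructor
      · exact (digit_lt p.2.1.isLt p.2.2.isLt).2 (Or.inl hp.1)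
      · exact le_of_lt ((digit_lt p.1.1.isLt p.1.2.isLt).2 (Or.inl hp.2))
    · -- left inverse
      intro x hx
      exact sigma_pair_eq _ _ _ _ (Fin.ext (Nat.mod_add_div x.1.val n))
        (Fin.ext (Nat.mod_add_div x.2.val n))
    · -- right inverse
      intro p hp
      obtain ⟨⟨q1, q2⟩, ⟨r2, r1⟩⟩ := p
      simp only [Prod.mk.injEq]
      exact ⟨sigma_pair_eq _ _ _ _ (Fin.ext (digit_div r1.isLt hn))
          (Fin.ext (digit_div r2.isLt hn)),
        sigma_pair_eq _ _ _ _ (Fin.ext (digit_mod r2.isLt))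
          (Fin.ext (digit_mod r1.isLt))⟩
  rw [key, Finset.card_product]
  congr 1 <;> rw [Finset.card_sigma] <;>
    exact Finset.sum_congr rfl fun a _ => Fin.card_Iio a


private lemma sign_eq_signAux {N : ℕ} (hN : 2 ≤ N) (f : Equiv.Perm (Fin N)) :
    Equiv.Perm.sign f = Equiv.Perm.signAux f := by
  have : Nontrivial (Fin N) := Fin.nontrivial_iff_two_le.mpr hN
  have hs : Function.Surjective
      (MonoidHom.mk' (Equiv.Perm.signAux (n := N)) Equiv.Perm.signAux_mul) := by
    intro a
    rcases Int.units_eq_one_or a with rfl | rfl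
    · exact ⟨1, Equiv.Perm.signAux_one N⟩
    · refine ⟨Equiv.swap ⟨0, by omega⟩ ⟨1, by omega⟩, Equiv.Perm.signAux_swap ?_⟩
      simp [Fin.ext_iff]
  have := Equiv.Perm.eq_sign_of_surjective_hom hs
  rw [← this]; rfl


private lemma units_pow_odd (s : ℤˣ) {k : ℕ} (hk : Odd k) : s ^ k = s := by
  rcases Int.units_eq_one_or s with rfl | rfl
  · exact one_pow k
  · exact Odd.neg_one_pow hk

private lemma addLeft_pow {α : Type*} [AddGroup α] (c : α) (k : ℕ) :
    (Equiv.addLeft c) ^ k = Equiv.addLeft (k • c) := by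
  induction k with
  | zero => ext x; simp
  | succ k ih =>
    ext x
    simp only [pow_succ, Equiv.Perm.mul_apply, ih, Equiv.coe_addLeft, succ_nsmul]
    rw [add_assoc]

private lemma sign_addLeft_odd {n : ℕ} [NeZero n] (hodd : Odd n) (c : ZMod n) :
    Equiv.Perm.sign (Equiv.addLeft c) = 1 := by
  have h1 : ((Equiv.addLeft c) ^ n : Perm (ZMod n)) = 1 := by
    rw [addLeft_pow]
    have : (n : ℕ) • c = 0 := by
      rw [nsmul_eq_mul, ZMod.natCast_self, zero_mul]
    rw [this]
    ext x; simp
  have h2 : (Equiv.Perm.sign (Equiv.addLeft c)) ^ n = 1 := by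
    rw [← map_pow, h1, map_one]
  rw [units_pow_odd _ hodd] at h2
  exact h2

private lemma digit_bound' {m n a b : ℕ} (ha : a < m) (hb : b < n) : a + m * b < m * n := by
  calc a + m * b < m + m * b := by omega
  _ = m * (b + 1) := by ring
  _ ≤ m * n := Nat.mul_le_mul_left m hb

section equivs
variable (m n : ℕ) [NeZero m] [NeZero n]

private def zmodMulNeZero : NeZero (m * n) := ⟨Nat.mul_ne_zero (NeZero.ne m) (NeZero.ne n)⟩

attribute [local instance] zmodMulNeZero

private def dEquiv : ZMod m × ZMod n ≃ ZMod (m * n) where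
  toFun p := ((p.1.val + m * p.2.val : ℕ) : ZMod (m * n))
  invFun z := (((z.val % m : ℕ) : ZMod m), ((z.val / m : ℕ) : ZMod n))
  left_inv p := by
    have hm : 0 < m := Nat.pos_of_ne_zero (NeZero.ne m)
    have hb : p.1.val + m * p.2.val < m * n := digit_bound' (ZMod.val_lt p.1) (ZMod.val_lt p.2)
    have hv : ((p.1.val + m * p.2.val : ℕ) : ZMod (m * n)).val = p.1.val + m * p.2.val :=
      ZMod.val_cast_of_lt hb
    have e1 : (p.1.val + m * p.2.val) % m = p.1.val := by
      rw [Nat.add_mul_mod_self_left, Nat.mod_eq_of_lt (ZMod.val_lt p.1)]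
    have e2 : (p.1.val + m * p.2.val) / m = p.2.val := by
      rw [Nat.add_mul_div_left _ _ hm, Nat.div_eq_of_lt (ZMod.val_lt p.1), Nat.zero_add]
    apply Prod.ext
    · show (((((p.1.val + m * p.2.val : ℕ) : ZMod (m * n))).val % m : ℕ) : ZMod m) = p.1
      rw [hv, e1]; exact ZMod.natCast_rightInverse p.1
    · show (((((p.1.val + m * p.2.val : ℕ) : ZMod (m * n))).val / m : ℕ) : ZMod n) = p.2
      rw [hv, e2]; exact ZMod.natCast_rightInverse p.2
  right_inv z := by
    have hm : 0 < m := Nat.pos_of_ne_zero (NeZero.ne m)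
    have h1 : z.val % m < m := Nat.mod_lt _ hm
    have h2 : z.val / m < n := Nat.div_lt_of_lt_mul (ZMod.val_lt z)
    show ((((z.val % m : ℕ) : ZMod m).val + m * ((z.val / m : ℕ) : ZMod n).val : ℕ)
        : ZMod (m * n)) = z
    rw [ZMod.val_cast_of_lt h1, ZMod.val_cast_of_lt h2, Nat.mod_add_div]
    exact ZMod.natCast_rightInverse z

private def eEquiv : ZMod m × ZMod n ≃ ZMod (m * n) where
  toFun p := ((p.2.val + n * p.1.val : ℕ) : ZMod (m * n))
  invFun z := (((z.val / n : ℕ) : ZMod m), ((z.val % n : ℕ) : ZMod n))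
  left_inv p := by
    have hn : 0 < n := Nat.pos_of_ne_zero (NeZero.ne n)
    have hb : p.2.val + n * p.1.val < n * m := digit_bound' (ZMod.val_lt p.2) (ZMod.val_lt p.1)
    have hv : ((p.2.val + n * p.1.val : ℕ) : ZMod (m * n)).val = p.2.val + n * p.1.val :=
      ZMod.val_cast_of_lt (lt_of_lt_of_eq hb (mul_comm n m))
    have e1 : (p.2.val + n * p.1.val) % n = p.2.val := by
      rw [Nat.add_mul_mod_self_left, Nat.mod_eq_of_lt (ZMod.val_lt p.2)]
    have e2 : (p.2.val + n * p.1.val) / n = p.1.val := by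
      rw [Nat.add_mul_div_left _ _ hn, Nat.div_eq_of_lt (ZMod.val_lt p.2), Nat.zero_add]
    apply Prod.ext
    · show (((((p.2.val + n * p.1.val : ℕ) : ZMod (m * n))).val / n : ℕ) : ZMod m) = p.1
      rw [hv, e2]; exact ZMod.natCast_rightInverse p.1
    · show (((((p.2.val + n * p.1.val : ℕ) : ZMod (m * n))).val % n : ℕ) : ZMod n) = p.2
      rw [hv, e1]; exact ZMod.natCast_rightInverse p.2
  right_inv z := by
    have hn : 0 < n := Nat.pos_of_ne_zero (NeZero.ne n)
    have h1 : z.val % n < n := Nat.mod_lt _ hn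
    have h2 : z.val / n < m :=
      Nat.div_lt_of_lt_mul (lt_of_lt_of_eq (ZMod.val_lt z) (mul_comm m n))
    show ((((z.val % n : ℕ) : ZMod n).val + n * ((z.val / n : ℕ) : ZMod m).val : ℕ)
        : ZMod (m * n)) = z
    rw [ZMod.val_cast_of_lt h1, ZMod.val_cast_of_lt h2, Nat.mod_add_div]
    exact ZMod.natCast_rightInverse z

private def zEquiv : Fin (m * n) ≃ ZMod (m * n) where
  toFun i := ((i.val : ℕ) : ZMod (m * n))
  invFun z := ⟨z.val, ZMod.val_lt z⟩
  left_inv i := Fin.ext (ZMod.val_cast_of_lt i.isLt)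
  right_inv z := ZMod.natCast_rightInverse z

private noncomputable def crtEquiv (h : Nat.Coprime m n) : ZMod (m * n) ≃ ZMod m × ZMod n :=
  Equiv.ofBijective (fun z => ((z.val : ZMod m), (z.val : ZMod n)))
    (by
      rw [Fintype.bijective_iff_injective_and_card]
      constructor
      · intro z w hzw
        have h1 : z.val ≡ w.val [MOD m] :=
          (ZMod.natCast_eq_natCast_iff _ _ _).1 (congrArg Prod.fst hzw)
        have h2 : z.val ≡ w.val [MOD n] :=
          (ZMod.natCast_eq_natCast_iff _ _ _).1 (congrArg Prod.snd hzw)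
        have h3 : z.val ≡ w.val [MOD m * n] :=
          (Nat.modEq_and_modEq_iff_modEq_mul h).1 ⟨h1, h2⟩
        have h4 : z.val = w.val := by
          have := h3
          unfold Nat.ModEq at this
          rwa [Nat.mod_eq_of_lt (ZMod.val_lt z), Nat.mod_eq_of_lt (ZMod.val_lt w)] at this
        exact ZMod.val_injective _ h4
      · simp [ZMod.card])

end equivs

section signs
variable {m n : ℕ} [NeZero m] [NeZero n]

attribute [local instance] zmodMulNeZero

private lemma signA (h : Nat.Coprime m n) (hmodd : Odd m) (hnodd : Odd n)
    (τ : Equiv.Perm (ZMod n)) (hτ : ∀ y, τ y = (m : ZMod n) * y) :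
    Equiv.Perm.sign ((dEquiv m n).trans (crtEquiv m n h)) = Equiv.Perm.sign τ := by
  have hE : (dEquiv m n).trans (crtEquiv m n h) =
      Equiv.prodCongrRight (fun x : ZMod m => τ.trans (Equiv.addLeft ((x.val : ℕ) : ZMod n))) := by
    apply Equiv.ext; intro q
    obtain ⟨p1, p2⟩ := q
    have hb : p1.val + m * p2.val < m * n := digit_bound' (ZMod.val_lt p1) (ZMod.val_lt p2)
    have hv : ((p1.val + m * p2.val : ℕ) : ZMod (m * n)).val = p1.val + m * p2.val :=
      ZMod.val_cast_of_lt hb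
    have lhs0 : ((dEquiv m n).trans (crtEquiv m n h)) (p1, p2) =
        (((((p1.val + m * p2.val : ℕ) : ZMod (m * n)).val : ℕ) : ZMod m),
         ((((p1.val + m * p2.val : ℕ) : ZMod (m * n)).val : ℕ) : ZMod n)) := rfl
    rw [lhs0, hv]
    apply Prod.ext
    · show ((p1.val + m * p2.val : ℕ) : ZMod m) = (Equiv.prodCongrRight _ (p1, p2)).1
      simp only [Equiv.prodCongrRight_apply]
      push_cast [ZMod.natCast_self]
      simp [ZMod.natCast_rightInverse p1]
    · show ((p1.val + m * p2.val : ℕ) : ZMod n) = (Equiv.prodCongrRight _ (p1, p2)).2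
      simp only [Equiv.prodCongrRight_apply, Equiv.trans_apply, Equiv.coe_addLeft, hτ p2]
      push_cast
      rw [ZMod.natCast_rightInverse p2]
  rw [hE]
  have hsgn : Equiv.Perm.sign (Equiv.prodCongrRight
      (fun x : ZMod m => τ.trans (Equiv.addLeft ((x.val : ℕ) : ZMod n)))) =
      ∏ x : ZMod m, Equiv.Perm.sign (τ.trans (Equiv.addLeft ((x.val : ℕ) : ZMod n))) :=
    Equiv.Perm.sign_prodCongrRight _
  rw [hsgn]
  have : ∀ x : ZMod m, Equiv.Perm.sign (τ.trans (Equiv.addLeft ((x.val : ℕ) : ZMod n)))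
      = Equiv.Perm.sign τ := by
    intro x
    rw [Equiv.Perm.sign_trans, sign_addLeft_odd hnodd, one_mul]
  rw [Finset.prod_congr rfl (fun x _ => this x), Finset.prod_const, Finset.card_univ, ZMod.card]
  exact units_pow_odd _ hmodd

private lemma signB (h : Nat.Coprime m n) (hmodd : Odd m) (hnodd : Odd n)
    (σ : Equiv.Perm (ZMod m)) (hσ : ∀ x, σ x = (n : ZMod m) * x) :
    Equiv.Perm.sign ((eEquiv m n).trans (crtEquiv m n h)) = Equiv.Perm.sign σ := by
  have hE : (eEquiv m n).trans (crtEquiv m n h) =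
      Equiv.prodCongrLeft (fun y : ZMod n => σ.trans (Equiv.addLeft ((y.val : ℕ) : ZMod m))) := by
    apply Equiv.ext; intro q
    obtain ⟨p1, p2⟩ := q
    have hb : p2.val + n * p1.val < n * m := digit_bound' (ZMod.val_lt p2) (ZMod.val_lt p1)
    have hv : ((p2.val + n * p1.val : ℕ) : ZMod (m * n)).val = p2.val + n * p1.val :=
      ZMod.val_cast_of_lt (lt_of_lt_of_eq hb (mul_comm n m))
    have lhs0 : ((eEquiv m n).trans (crtEquiv m n h)) (p1, p2) =
        (((((p2.val + n * p1.val : ℕ) : ZMod (m * n)).val : ℕ) : ZMod m),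
         ((((p2.val + n * p1.val : ℕ) : ZMod (m * n)).val : ℕ) : ZMod n)) := rfl
    rw [lhs0, hv]
    apply Prod.ext
    · show ((p2.val + n * p1.val : ℕ) : ZMod m) = (Equiv.prodCongrLeft _ (p1, p2)).1
      simp only [Equiv.prodCongrLeft_apply, Equiv.trans_apply, Equiv.coe_addLeft, hσ p1]
      push_cast
      rw [ZMod.natCast_rightInverse p1]
    · show ((p2.val + n * p1.val : ℕ) : ZMod n) = (Equiv.prodCongrLeft _ (p1, p2)).2
      simp only [Equiv.prodCongrLeft_apply]
      push_cast [ZMod.natCast_self]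
      simp [ZMod.natCast_rightInverse p2]
  rw [hE]
  have hsgn := Equiv.Perm.sign_prodCongrLeft
    (fun y : ZMod n => σ.trans (Equiv.addLeft ((y.val : ℕ) : ZMod m)))
  rw [hsgn]
  have : ∀ y : ZMod n, Equiv.Perm.sign (σ.trans (Equiv.addLeft ((y.val : ℕ) : ZMod m)))
      = Equiv.Perm.sign σ := by
    intro y
    rw [Equiv.Perm.sign_trans, sign_addLeft_odd hmodd, one_mul]
  rw [Finset.prod_congr rfl (fun y _ => this y), Finset.prod_const, Finset.card_univ, ZMod.card]
  exact units_pow_odd _ hnodd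

end signs

private lemma parity_final {m n : ℕ} (hm : Odd m) (hn : Odd n) :
    ((-1 : ℤˣ)) ^ ((∑ a : Fin m, (a : ℕ)) * (∑ b : Fin n, (b : ℕ))) =
      (-1 : ℤˣ) ^ ((m - 1) * (n - 1) / 4) := by
  have hmn : Odd (m * n) := hm.mul hn
  obtain ⟨u, hu⟩ := hm; obtain ⟨v, hv⟩ := hn
  have hcm2 : (∑ a : Fin m, (a : ℕ)) * 2 = m * (m - 1) := by
    rw [Fin.sum_univ_eq_sum_range (fun i => i) m]; exact Finset.sum_range_id_mul_two m
  have hcn2 : (∑ b : Fin n, (b : ℕ)) * 2 = n * (n - 1) := by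
    rw [Fin.sum_univ_eq_sum_range (fun i => i) n]; exact Finset.sum_range_id_mul_two n
  have h1 : m - 1 = 2 * u := by omega
  have h2 : n - 1 = 2 * v := by omega
  have hmu : m * (m - 1) = 2 * (m * u) := by rw [h1]; ring
  have hnv : n * (n - 1) = 2 * (n * v) := by rw [h2]; ring
  have hcm : (∑ a : Fin m, (a : ℕ)) = m * u := by omega
  have hcn : (∑ b : Fin n, (b : ℕ)) = n * v := by omega
  have hexp : (m - 1) * (n - 1) / 4 = u * v := by
    rw [h1, h2]
    have : 2 * u * (2 * v) = 4 * (u * v) := by ring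
    rw [this]
    omega
  rw [hcm, hcn, hexp]
  have key : m * u * (n * v) = u * v * (m * n) := by ring
  rcases Nat.even_or_odd (u * v) with he | ho
  · rw [Even.neg_one_pow (by rw [key]; exact he.mul_right _), Even.neg_one_pow he]
  · rw [Odd.neg_one_pow (by rw [key]; exact ho.mul hmn), Odd.neg_one_pow ho]

/-- Zolotarev reciprocity: for coprime odd positive m, n,
[m/n]·[n/m] = (-1)^((m-1)(n-1)/4), where [a/b] is the sign of multiplication by a on ℤ/bℤ. -/
theorem stmt_6 (m n : ℕ) (hm : Odd m) (hn : Odd n) (hm0 : 0 < m) (hn0 : 0 < n)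
    (h : Nat.Coprime m n) :
    haveI : NeZero m := ⟨hm0.ne'⟩
    haveI : NeZero n := ⟨hn0.ne'⟩
    ∀ (σ : Equiv.Perm (ZMod m)) (τ : Equiv.Perm (ZMod n)),
      (∀ x, σ x = (n : ZMod m) * x) → (∀ y, τ y = (m : ZMod n) * y) →
      Equiv.Perm.sign τ * Equiv.Perm.sign σ = (-1 : ℤˣ) ^ ((m - 1) * (n - 1) / 4) := by
  haveI : NeZero m := ⟨hm0.ne'⟩
  haveI : NeZero n := ⟨hn0.ne'⟩
  intro σ τ hσ hτ
  by_cases hm1 : m = 1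
  · subst hm1
    have hσ1 : σ = 1 := Equiv.ext fun x => Subsingleton.elim _ _
    have hτ1 : τ = 1 := Equiv.ext fun y => by rw [hτ y]; simp
    rw [hσ1, hτ1, map_one, map_one]
    norm_num
  by_cases hn1 : n = 1
  · subst hn1
    have hτ1 : τ = 1 := Equiv.ext fun y => Subsingleton.elim _ _
    have hσ1 : σ = 1 := Equiv.ext fun x => by rw [hσ x]; simp
    rw [hσ1, hτ1, map_one, map_one]
    norm_num
  haveI : NeZero (m * n) := zmodMulNeZero m n
  have hm3 : 3 ≤ m := by rcases hm with ⟨u, hu⟩; omega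
  have hn3 : 3 ≤ n := by rcases hn with ⟨v, hv⟩; omega
  have hN2 : 2 ≤ m * n := le_trans (by norm_num) (Nat.mul_le_mul hm3 hn3)
  have hA := signA h hm hn τ hτ
  have hB := signB h hm hn σ hσ
  have hcomp : ((dEquiv m n).trans (crtEquiv m n h)).trans
      ((eEquiv m n).trans (crtEquiv m n h)).symm = (dEquiv m n).trans (eEquiv m n).symm := by
    apply Equiv.ext; intro p
    simp [Equiv.trans_apply, Equiv.symm_trans_apply, Equiv.symm_apply_apply]
  have step1 : Equiv.Perm.sign ((dEquiv m n).trans (eEquiv m n).symm) =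
      Equiv.Perm.sign τ * Equiv.Perm.sign σ := by
    rw [← hcomp, Equiv.Perm.sign_trans, Equiv.Perm.sign_symm, hA, hB, mul_comm]
  have step2 : Equiv.Perm.sign (transPerm m n hm0 hn0) =
      Equiv.Perm.sign ((dEquiv m n).trans (eEquiv m n).symm) := by
    apply Equiv.Perm.sign_eq_sign_of_equiv _ _ ((zEquiv m n).trans (dEquiv m n).symm)
    intro x
    have hq : x.val / n < m := Nat.div_lt_of_lt_mul (lt_of_lt_of_eq x.isLt (mul_comm m n))
    have hr : x.val % n < n := Nat.mod_lt _ hn0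
    have e1 : ((x.val : ℕ) : ZMod (m * n)).val = x.val := ZMod.val_cast_of_lt x.isLt
    have key : ((dEquiv m n).trans (eEquiv m n).symm)
        (((zEquiv m n).trans (dEquiv m n).symm) x) =
      ((zEquiv m n).trans (dEquiv m n).symm) (transPerm m n hm0 hn0 x) := ?_
    · exact key.symm
    rw [Equiv.trans_apply, Equiv.trans_apply, Equiv.trans_apply, Equiv.apply_symm_apply,
      Equiv.eq_symm_apply]
    have he : (eEquiv m n).symm (zEquiv m n x) =
        (((x.val / n : ℕ) : ZMod m), ((x.val % n : ℕ) : ZMod n)) := by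
      rw [show zEquiv m n x = ((x.val : ℕ) : ZMod (m * n)) from rfl]
      unfold eEquiv
      simp only [Equiv.coe_fn_symm_mk]
      rw [e1]
    rw [he]
    show ((((x.val / n : ℕ) : ZMod m).val + m * (((x.val % n : ℕ) : ZMod n)).val : ℕ)
        : ZMod (m * n)) = (((transPerm m n hm0 hn0 x).val : ℕ) : ZMod (m * n))
    rw [ZMod.val_cast_of_lt hq, ZMod.val_cast_of_lt hr]
    rfl
  calc Equiv.Perm.sign τ * Equiv.Perm.sign σ
      = Equiv.Perm.sign ((dEquiv m n).trans (eEquiv m n).symm) := step1.symm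
    _ = Equiv.Perm.sign (transPerm m n hm0 hn0) := step2.symm
    _ = Equiv.Perm.signAux (transPerm m n hm0 hn0) := sign_eq_signAux hN2 _
    _ = (-1 : ℤˣ) ^ ((∑ a : Fin m, (a : ℕ)) * (∑ b : Fin n, (b : ℕ))) :=
        sign_transPerm m n hm0 hn0
    _ = (-1 : ℤˣ) ^ ((m - 1) * (n - 1) / 4) := parity_final hm hn
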